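/- A 2×4 real matrix M with nonnegative entries summing to 1 has rank at most 1 if and only if there exist q₁, q₂₁, q₂₂, q₃ ∈ [0,1] such that, indexing columns by pairs (u₂,u₃) ∈ Fin 2 × Fin 2, M(1,(u₂,u₃)) = q₁ · r(u₂,u₃), M(2,(u₂,u₃)) = (1−q₁) · r(u₂,u₃), where r(u₂,u₃) = (if u₂=1 then s(u₃) else 1−s(u₃)) · (if u₃=1 then q₃ else 1−q₃) with s(1)=q₂₁, s(2)=q₂₂. -/

import Mathlib

open Matrix

lemma outer_rank_le_one {m n : Type*} [Fintype m] [Fintype n]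
    (v : m → ℝ) (w : n → ℝ) :
    (Matrix.of fun i u => v i * w u).rank ≤ 1 := by
  have h : (Matrix.of fun i u => v i * w u) =
      (Matrix.of fun i (_ : Fin 1) => v i) * (Matrix.of fun (_ : Fin 1) u => w u) := by
    ext i u; simp [Matrix.mul_apply]
  rw [h]
  exact (Matrix.rank_mul_le_left _ _).trans
    ((Matrix.rank_le_card_width _).trans (by simp))

lemma exists_outer_of_rank_le_one {m n : Type*} [Fintype m] [Fintype n]
    (M : Matrix m n ℝ) (h : M.rank ≤ 1) :
    ∃ (v : m → ℝ) (w : n → ℝ), ∀ i u, M i u = v i * w u := by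
  rw [Matrix.rank_eq_finrank_span_cols] at h
  set S := Submodule.span ℝ (Set.range Mᵀ)
  have hfd : FiniteDimensional ℝ S := by
    apply FiniteDimensional.span_of_finite
    exact Set.finite_range _
  have hrank : Module.rank ℝ S ≤ 1 := by
    rw [← Module.finrank_eq_rank]
    exact_mod_cast h
  obtain ⟨v₀, hv₀⟩ := rank_le_one_iff.mp hrank
  choose c hc using fun j : n => hv₀ ⟨Mᵀ j, Submodule.subset_span (Set.mem_range_self j)⟩
  refine ⟨fun i => (v₀ : m → ℝ) i, c, fun i j => ?_⟩
  have := congrArg (Subtype.val) (hc j)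
  have := congrFun this i
  simp at this
  rw [mul_comm]
  exact this.symm


/-- Factorization theorem for the network `3 → 2` on three binary variables:
a nonnegative `2 × 4` matrix with entries summing to `1` has rank at most `1`
iff it factors according to the network.  Here rows are indexed by the value
of `X₁` and columns by pairs `(u₂, u₃)`; `0 : Fin 2` plays the role of the
level "1" and `1 : Fin 2` that of the level "2". -/
theorem factorization_three_binary (M : Matrix (Fin 2) (Fin 2 × Fin 2) ℝ)
    (hnn : ∀ i u, 0 ≤ M i u) (hsum : ∑ i, ∑ u, M i u = 1) :
    M.rank ≤ 1 ↔
      ∃ (q1 q3 : ℝ) (s : Fin 2 → ℝ),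
        q1 ∈ Set.Icc (0 : ℝ) 1 ∧ q3 ∈ Set.Icc (0 : ℝ) 1 ∧
        (∀ u, s u ∈ Set.Icc (0 : ℝ) 1) ∧
        ∀ u2 u3 : Fin 2,
          M 0 (u2, u3) =
            q1 * ((if u2 = 0 then s u3 else 1 - s u3) *
              (if u3 = 0 then q3 else 1 - q3)) ∧
          M 1 (u2, u3) =
            (1 - q1) * ((if u2 = 0 then s u3 else 1 - s u3) *
              (if u3 = 0 then q3 else 1 - q3)) := by
  constructor
  · intro h
    obtain ⟨v, w, hvw⟩ := exists_outer_of_rank_le_one M h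
    set a : Fin 2 → ℝ := fun i => ∑ u, M i u with ha
    set c : Fin 2 × Fin 2 → ℝ := fun u => ∑ i, M i u with hc
    have hVW : (∑ i, v i) * (∑ u, w u) = 1 := by
      rw [Finset.sum_mul_sum]
      rw [← hsum]
      exact Finset.sum_congr rfl fun i _ => Finset.sum_congr rfl fun u _ => (hvw i u).symm
    have hac : ∀ i u, M i u = a i * c u := by
      intro i u
      have h1 : a i = v i * (∑ u, w u) := by
        simp only [ha, Finset.mul_sum]
        exact Finset.sum_congr rfl fun u _ => hvw i u
      have h2 : c u = (∑ i, v i) * w u := by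
        simp only [hc, Finset.sum_mul]
        exact Finset.sum_congr rfl fun i _ => hvw i u
      rw [h1, h2, hvw i u]
      ring_nf
      rw [mul_assoc, mul_comm (∑ u, w u), hVW, mul_one]
    have hcnn : ∀ u, 0 ≤ c u := fun u => Finset.sum_nonneg fun i _ => hnn i u
    have hann : ∀ i, 0 ≤ a i := fun i => Finset.sum_nonneg fun u _ => hnn i u
    have hasum : a 0 + a 1 = 1 := by
      rw [← hsum, Fin.sum_univ_two]
    have hcsum : c (0,0) + c (0,1) + c (1,0) + c (1,1) = 1 := by
      rw [← hsum]
      simp only [ha]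
      simp [hc, Fintype.sum_prod_type, Fin.sum_univ_two]
      ring
    set t : Fin 2 → ℝ := fun u3 => c (0, u3) + c (1, u3) with htdef
    set q3 : ℝ := t 0 with hq3
    have ht1 : t 1 = 1 - q3 := by
      simp only [hq3, htdef]; linarith
    set s : Fin 2 → ℝ := fun u3 => if t u3 = 0 then 0 else c (0, u3) / t u3 with hs
    have htnn : ∀ u3, 0 ≤ t u3 := fun u3 => add_nonneg (hcnn _) (hcnn _)
    have hcfac : ∀ u2 u3 : Fin 2, c (u2, u3) = (if u2 = 0 then s u3 else 1 - s u3) * t u3 := by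
      intro u2 u3
      by_cases h0 : t u3 = 0
      · have ht : c (0, u3) + c (1, u3) = 0 := h0
        have h01 : c (0, u3) = 0 ∧ c (1, u3) = 0 :=
          ⟨by linarith [hcnn (0, u3), hcnn (1, u3)],
           by linarith [hcnn (0, u3), hcnn (1, u3)]⟩
        fin_cases u2 <;> simp [h0, h01.1, h01.2]
      · simp only [hs, h0, if_neg h0]
        fin_cases u2
        · simp [div_mul_cancel₀ _ h0]
        · simp only [Fin.mk_one, if_neg (by decide : (1 : Fin 2) ≠ 0)]
          field_simp
          simp only [htdef]; ring
    refine ⟨a 0, q3, s, ⟨hann 0, by linarith [hann 1]⟩,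
      ⟨htnn 0, by linarith [htnn 1, ht1]⟩, fun u3 => ?_, fun u2 u3 => ?_⟩
    · by_cases h0 : t u3 = 0
      · simp [hs, h0]
      · simp only [hs, if_neg h0]
        have hpos : 0 < t u3 := lt_of_le_of_ne (htnn u3) (Ne.symm h0)
        constructor
        · exact div_nonneg (hcnn _) (htnn u3)
        · rw [div_le_one hpos]
          have := hcnn (1, u3)
          simp only [htdef]; linarith
    · have htq : (if u3 = 0 then q3 else 1 - q3) = t u3 := by
        fin_cases u3 <;> simp [ht1, hq3]
      rw [htq]
      have h1mq : 1 - a 0 = a 1 := by linarith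
      rw [h1mq]
      exact ⟨by rw [hac 0 (u2, u3), hcfac u2 u3], by rw [hac 1 (u2, u3), hcfac u2 u3]⟩
  · rintro ⟨q1, q3, s, _, _, _, hM⟩
    have hMeq : M = Matrix.of fun i u => (![q1, 1 - q1]) i *
        ((if u.1 = 0 then s u.2 else 1 - s u.2) * (if u.2 = 0 then q3 else 1 - q3)) := by
      ext i ⟨u2, u3⟩
      fin_cases i
      · simpa using (hM u2 u3).1
      · simpa using (hM u2 u3).2
    rw [hMeq]
    exact outer_rank_le_one _ _
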